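/- Let L be a lattice in which the lengths of all chains between any two fixed comparable elements are uniformly bounded. If L is semimodular or lower semimodular, then for any two elements a ≤ b of L, any two maximal chains between a and b are r-equivalent; in particular, all maximal chains between a and b have the same length. -/

import Mathlib

/-- `c : Fin (k+1) → L` is a maximal chain of length `k` between `a` and `b`:
`a = c 0 ⋖ c 1 ⋖ ⋯ ⋖ c k = b`. -/
def IsMaximalChain {L : Type*} [Lattice L] (a b : L) (k : ℕ) (c : Fin (k + 1) → L) : Prop :=
  c 0 = a ∧ c (Fin.last k) = b ∧ ∀ i : Fin k, c i.castSucc ⋖ c i.succ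

/-- One elementary step of r-equivalence: both chains are maximal chains of length `k`
between `a` and `b`, and they differ in exactly one place. -/
def RStep {L : Type*} [Lattice L] (a b : L) (k : ℕ) (c d : Fin (k + 1) → L) : Prop :=
  IsMaximalChain a b k c ∧ IsMaximalChain a b k d ∧ (∃! i : Fin (k + 1), c i ≠ d i)

/-- Two maximal chains of length `k` between `a` and `b` are r-equivalent if one can pass
from the first to the second by a finite sequence of maximal chains between `a` and `b`,
each obtained from the previous one by replacing exactly one element. -/
def REquiv {L : Type*} [Lattice L] (a b : L) (k : ℕ) (c d : Fin (k + 1) → L) : Prop :=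
  Relation.ReflTransGen (RStep a b k) c d

/-- A lattice is semimodular if `a ⊓ b ⋖ a` and `a ⊓ b ⋖ b` imply
`a ⋖ a ⊔ b` and `b ⋖ a ⊔ b`. -/
def Semimodular (L : Type*) [Lattice L] : Prop :=
  ∀ x y : L, x ⊓ y ⋖ x → x ⊓ y ⋖ y → (x ⋖ x ⊔ y ∧ y ⋖ x ⊔ y)

/-- A lattice is lower semimodular if `a ⋖ a ⊔ b` and `b ⋖ a ⊔ b` imply
`a ⊓ b ⋖ a` and `a ⊓ b ⋖ b`. -/
def LowerSemimodular (L : Type*) [Lattice L] : Prop :=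
  ∀ x y : L, x ⋖ x ⊔ y → y ⋖ x ⊔ y → (x ⊓ y ⋖ x ∧ x ⊓ y ⋖ y)

namespace MCAux

variable {L : Type*} [Lattice L]

lemma mono {a b : L} {k : ℕ} {c : Fin (k+1) → L} (hc : IsMaximalChain a b k c) :
    Monotone c :=
  ((Fin.strictMono_iff_lt_succ).2 fun i => (hc.2.2 i).1).monotone

lemma le_top {a b : L} {k : ℕ} {c : Fin (k+1) → L} (hc : IsMaximalChain a b k c)
    (i : Fin (k+1)) : c i ≤ b := by
  have := mono hc (Fin.le_last i)
  rwa [hc.2.1] at this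

lemma cov_zero {a b : L} {k : ℕ} {c : Fin (k+2) → L} (hc : IsMaximalChain a b (k+1) c) :
    a ⋖ c 1 := by
  have := hc.2.2 0
  rw [show (0 : Fin (k+1)).castSucc = 0 from rfl, show (0 : Fin (k+1)).succ = 1 from rfl,
    hc.1] at this
  exact this

lemma tail_max {a b : L} {k : ℕ} {c : Fin (k+2) → L} (hc : IsMaximalChain a b (k+1) c) :
    IsMaximalChain (c 1) b k (Fin.tail c) := by
  refine ⟨rfl, ?_, ?_⟩
  · show c (Fin.last k).succ = b
    rw [Fin.succ_last]; exact hc.2.1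
  · intro i
    have := hc.2.2 i.succ
    rwa [← Fin.succ_castSucc] at this

lemma cons_max {a z b : L} {k : ℕ} {g : Fin (k+1) → L} (haz : a ⋖ z)
    (hg : IsMaximalChain z b k g) : IsMaximalChain a b (k+1) (Fin.cons a g) := by
  refine ⟨rfl, ?_, ?_⟩
  · rw [← Fin.succ_last, Fin.cons_succ]; exact hg.2.1
  · intro i
    induction i using Fin.cases with
    | zero => simpa [hg.1] using haz
    | succ j =>
      rw [← Fin.succ_castSucc, Fin.cons_succ, Fin.cons_succ]
      exact hg.2.2 j

lemma cons_rstep {z b a : L} {k : ℕ} {g h : Fin (k+1) → L} (haz : a ⋖ z)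
    (hz : ∀ e : Fin (k+1) → L, IsMaximalChain z b k e → e 0 = z)
    (hs : RStep z b k g h) : RStep a b (k+1) (Fin.cons a g) (Fin.cons a h) := by
  obtain ⟨hg, hh, i, hi, huniq⟩ := hs
  refine ⟨cons_max (hg.1 ▸ haz) hg, cons_max (hh.1 ▸ haz) hh, i.succ, ?_, ?_⟩
  · intro hEq
    simp at hEq
    exact hi hEq
  · intro j
    induction j using Fin.cases with
    | zero => intro hj; exact absurd rfl hj
    | succ j' =>
      intro hj
      have hj2 : g j' ≠ h j' := by simpa using hj
      rw [huniq j' hj2]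

lemma cons_requiv {z b a : L} {k : ℕ} {g h : Fin (k+1) → L} (haz : a ⋖ z)
    (he : REquiv z b k g h) : REquiv a b (k+1) (Fin.cons a g) (Fin.cons a h) := by
  induction he with
  | refl => exact Relation.ReflTransGen.refl
  | tail _ h2 ih => exact Relation.ReflTransGen.tail ih (cons_rstep haz (fun _ hmc => hmc.1) h2)

lemma rstep_symm {a b : L} {k : ℕ} {c d : Fin (k+1) → L} (h : RStep a b k c d) :
    RStep a b k d c := by
  obtain ⟨h1, h2, i, hi, hu⟩ := h
  exact ⟨h2, h1, i, fun he => hi he.symm, fun j hj => hu j fun he => hj he.symm⟩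

lemma requiv_symm {a b : L} {k : ℕ} {c d : Fin (k+1) → L} (h : REquiv a b k c d) :
    REquiv a b k d c :=
  haveI : Std.Symm (RStep a b k) := ⟨fun _ _ hs => rstep_symm hs⟩
  Std.Symm.symm (r := Relation.ReflTransGen (RStep a b k)) _ _ h

lemma eq_of_len_zero {a b : L} {m : ℕ} {d : Fin (m+1) → L} (hab : a = b)
    (hd : IsMaximalChain a b m d) : m = 0 := by
  cases m with
  | zero => rfl
  | succ m' =>
    exfalso
    have h1 : a ⋖ d 1 := cov_zero hd
    have h2 : d 1 ≤ b := le_top hd 1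
    rw [← hab] at h2
    exact h1.1.not_ge h2

/-- In a semimodular lattice, if there is a maximal chain from `x` to `y` and `x ⋖ z ≤ y`,
then there is a maximal chain from `z` to `y`. -/
lemma exists_chain (hsm : Semimodular L) :
    ∀ n : ℕ, ∀ x y z : L, (∃ c : Fin (n+1) → L, IsMaximalChain x y n c) →
      x ⋖ z → z ≤ y → ∃ j : ℕ, ∃ e : Fin (j+1) → L, IsMaximalChain z y j e := by
  intro n
  induction n with
  | zero =>
    rintro x y z ⟨c, hc⟩ hxz hzy
    have hxy : x = y := by rw [← hc.1, ← hc.2.1]; rfl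
    exact absurd (lt_of_lt_of_le hxz.1 hzy) (hxy ▸ lt_irrefl x)
  | succ n IHn =>
    rintro x y z ⟨c, hc⟩ hxz hzy
    have hx1 : x ⋖ c 1 := cov_zero hc
    by_cases hzc : z = c 1
    · exact ⟨n, Fin.tail c, hzc ▸ tail_max hc⟩
    · -- z ⊓ c 1 = x
      have hnle : ¬ z ≤ c 1 := by
        intro hle
        rcases lt_or_eq_of_le hle with h | h
        · exact hx1.2 hxz.1 h
        · exact hzc h
      have hmeet : z ⊓ c 1 = x := by
        have h1 : z ⊓ c 1 < z := inf_lt_left.2 hnle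
        have h2 : x ≤ z ⊓ c 1 := le_inf hxz.1.le hx1.1.le
        rcases lt_or_eq_of_le h2 with h | h
        · exact absurd h1 (fun h1 => hxz.2 h h1)
        · exact h.symm
      obtain ⟨hcov1, hcov2⟩ := hsm z (c 1) (hmeet ▸ hxz) (hmeet ▸ hx1)
      have hc1y : c 1 ≤ y := le_top hc 1
      have hsup_le : z ⊔ c 1 ≤ y := sup_le hzy hc1y
      obtain ⟨j, e, he⟩ := IHn (c 1) y (z ⊔ c 1) ⟨Fin.tail c, tail_max hc⟩ hcov2 hsup_le
      exact ⟨j + 1, Fin.cons z e, cons_max (he.1 ▸ hcov1) he⟩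

lemma bound_shift {a b z : L} {N : ℕ} (haz : a ⋖ z)
    (hN : ∀ (j : ℕ) (e : Fin (j+1) → L), IsMaximalChain a b j e → j ≤ N) :
    ∀ (j : ℕ) (e : Fin (j+1) → L), IsMaximalChain z b j e → j ≤ N - 1 := by
  intro j e he
  have := hN (j+1) (Fin.cons a e) (cons_max (he.1 ▸ haz) he)
  omega

/-- Equal length of maximal chains, in the semimodular case. -/
lemma len_eq (hsm : Semimodular L) :
    ∀ N : ℕ, ∀ a b : L,
      (∀ (j : ℕ) (e : Fin (j+1) → L), IsMaximalChain a b j e → j ≤ N) →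
      ∀ (k m : ℕ) (c : Fin (k+1) → L) (d : Fin (m+1) → L),
        IsMaximalChain a b k c → IsMaximalChain a b m d → k = m := by
  intro N
  induction N using Nat.strong_induction_on with
  | _ N IH =>
    intro a b hN k m c d hc hd
    cases k with
    | zero =>
      have hab : a = b := by rw [← hc.1, ← hc.2.1]; rfl
      exact (eq_of_len_zero hab hd).symm
    | succ k' =>
      cases m with
      | zero =>
        have hab : a = b := by rw [← hd.1, ← hd.2.1]; rfl
        exact eq_of_len_zero hab hc
      | succ m' =>
        have hac1 : a ⋖ c 1 := cov_zero hc
        have had1 : a ⋖ d 1 := cov_zero hd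
        have hNpos : 1 ≤ N := le_trans (Nat.le_add_left 1 k') (hN _ c hc)
        have hN1 : N - 1 < N := by omega
        have hbc : ∀ (j : ℕ) (e : Fin (j+1) → L), IsMaximalChain (c 1) b j e → j ≤ N - 1 :=
          bound_shift hac1 hN
        have hbd : ∀ (j : ℕ) (e : Fin (j+1) → L), IsMaximalChain (d 1) b j e → j ≤ N - 1 :=
          bound_shift had1 hN
        have htc : IsMaximalChain (c 1) b k' (Fin.tail c) := tail_max hc
        have htd : IsMaximalChain (d 1) b m' (Fin.tail d) := tail_max hd
        by_cases hcd : c 1 = d 1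
        · have := IH (N-1) hN1 (c 1) b hbc k' m' (Fin.tail c) (Fin.tail d) htc (hcd ▸ htd)
          omega
        · -- c 1 ≠ d 1
          have hmeet : c 1 ⊓ d 1 = a := by
            have hnle : ¬ c 1 ≤ d 1 := by
              intro hle
              rcases lt_or_eq_of_le hle with h | h
              · exact had1.2 hac1.1 h
              · exact hcd h
            have h1 : c 1 ⊓ d 1 < c 1 := inf_lt_left.2 hnle
            have h2 : a ≤ c 1 ⊓ d 1 := le_inf hac1.1.le had1.1.le
            rcases lt_or_eq_of_le h2 with h | h
            · exact absurd h1 (fun h1 => hac1.2 h h1)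
            · exact h.symm
          obtain ⟨he1, he2⟩ := hsm (c 1) (d 1) (hmeet ▸ hac1) (hmeet ▸ had1)
          have hsup_le : c 1 ⊔ d 1 ≤ b := sup_le (le_top hc 1) (le_top hd 1)
          obtain ⟨j, g, hg⟩ := exists_chain hsm k' (c 1) b (c 1 ⊔ d 1) ⟨Fin.tail c, htc⟩
            he1 hsup_le
          have hC : IsMaximalChain (c 1) b (j+1) (Fin.cons (c 1) g) :=
            cons_max (hg.1 ▸ he1) hg
          have hD : IsMaximalChain (d 1) b (j+1) (Fin.cons (d 1) g) :=
            cons_max (hg.1 ▸ he2) hg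
          have e1 := IH (N-1) hN1 (c 1) b hbc k' (j+1) (Fin.tail c) (Fin.cons (c 1) g) htc hC
          have e2 := IH (N-1) hN1 (d 1) b hbd m' (j+1) (Fin.tail d) (Fin.cons (d 1) g) htd hD
          omega

lemma requiv_aux (hsm : Semimodular L) :
    ∀ N : ℕ, ∀ a b : L,
      (∀ (j : ℕ) (e : Fin (j+1) → L), IsMaximalChain a b j e → j ≤ N) →
      ∀ (k : ℕ) (c d : Fin (k+1) → L),
        IsMaximalChain a b k c → IsMaximalChain a b k d → REquiv a b k c d := by
  intro N
  induction N using Nat.strong_induction_on with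
  | _ N IH =>
    intro a b hN k c d hc hd
    cases k with
    | zero =>
      have hcd : c = d := by
        funext i
        have hi0 : i = 0 := Fin.ext (Nat.lt_one_iff.mp i.isLt)
        rw [hi0, hc.1, hd.1]
      rw [hcd]
      exact Relation.ReflTransGen.refl
    | succ k' =>
      have hac1 : a ⋖ c 1 := cov_zero hc
      have had1 : a ⋖ d 1 := cov_zero hd
      have hNpos : 1 ≤ N := le_trans (Nat.le_add_left 1 k') (hN _ c hc)
      have hN1 : N - 1 < N := by omega
      have hbc := bound_shift hac1 hN
      have hbd := bound_shift had1 hN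
      have htc : IsMaximalChain (c 1) b k' (Fin.tail c) := tail_max hc
      have htd : IsMaximalChain (d 1) b k' (Fin.tail d) := tail_max hd
      have hcc : Fin.cons a (Fin.tail c) = c := by rw [← hc.1]; exact Fin.cons_self_tail c
      have hdd : Fin.cons a (Fin.tail d) = d := by rw [← hd.1]; exact Fin.cons_self_tail d
      by_cases hcd : c 1 = d 1
      · have h1 := IH (N-1) hN1 (c 1) b hbc k' (Fin.tail c) (Fin.tail d) htc (hcd ▸ htd)
        have h2 := cons_requiv hac1 h1
        rwa [hcc, hdd] at h2
      · have hmeet : c 1 ⊓ d 1 = a := by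
          have hnle : ¬ c 1 ≤ d 1 := by
            intro hle
            rcases lt_or_eq_of_le hle with h | h
            · exact had1.2 hac1.1 h
            · exact hcd h
          have h1 : c 1 ⊓ d 1 < c 1 := inf_lt_left.2 hnle
          have h2 : a ≤ c 1 ⊓ d 1 := le_inf hac1.1.le had1.1.le
          rcases lt_or_eq_of_le h2 with h | h
          · exact absurd h1 (fun h1 => hac1.2 h h1)
          · exact h.symm
        obtain ⟨he1, he2⟩ := hsm (c 1) (d 1) (hmeet ▸ hac1) (hmeet ▸ had1)
        have hsup_le : c 1 ⊔ d 1 ≤ b := sup_le (le_top hc 1) (le_top hd 1)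
        obtain ⟨j, g, hg⟩ := exists_chain hsm k' (c 1) b (c 1 ⊔ d 1) ⟨Fin.tail c, htc⟩
          he1 hsup_le
        have hC : IsMaximalChain (c 1) b (j+1) (Fin.cons (c 1) g) :=
          cons_max (hg.1 ▸ he1) hg
        have hD : IsMaximalChain (d 1) b (j+1) (Fin.cons (d 1) g) :=
          cons_max (hg.1 ▸ he2) hg
        have hk' : k' = j + 1 :=
          len_eq hsm (N-1) (c 1) b hbc k' (j+1) (Fin.tail c) (Fin.cons (c 1) g) htc hC
        subst hk'
        have r1 : REquiv (c 1) b (j+1) (Fin.tail c) (Fin.cons (c 1) g) :=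
          IH (N-1) hN1 (c 1) b hbc (j+1) _ _ htc hC
        have r2 : REquiv (d 1) b (j+1) (Fin.tail d) (Fin.cons (d 1) g) :=
          IH (N-1) hN1 (d 1) b hbd (j+1) _ _ htd hD
        have R1 : REquiv a b (j+1+1) c (Fin.cons a (Fin.cons (c 1) g)) := by
          have h3 := cons_requiv hac1 r1
          rwa [hcc] at h3
        have R3 : REquiv a b (j+1+1) (Fin.cons a (Fin.cons (d 1) g)) d := by
          have h3 := cons_requiv had1 r2
          rw [hdd] at h3
          exact requiv_symm h3
        have R2 : RStep a b (j+1+1) (Fin.cons a (Fin.cons (c 1) g))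
            (Fin.cons a (Fin.cons (d 1) g)) := by
          refine ⟨cons_max (hC.1 ▸ hac1) hC, cons_max (hD.1 ▸ had1) hD, (1 : Fin (j+3)), ?_, ?_⟩
          · intro hEq
            apply hcd
            have hone : (1 : Fin (j+3)) = Fin.succ (0 : Fin (j+2)) := Fin.ext (by simp)
            rw [hone] at hEq
            simpa using hEq
          · intro i
            induction i using Fin.cases with
            | zero => intro hEq; exact absurd rfl hEq
            | succ i' =>
              induction i' using Fin.cases with
              | zero => intro _; rfl
              | succ i'' =>
                intro hEq
                exfalso
                apply hEq
                simp
        exact (R1.trans (Relation.ReflTransGen.single R2)).trans R3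

/-! ### Duality -/

def dchain {k : ℕ} (c : Fin (k+1) → L) : Fin (k+1) → Lᵒᵈ :=
  fun i => OrderDual.toDual (c i.rev)

def udchain {k : ℕ} (c : Fin (k+1) → Lᵒᵈ) : Fin (k+1) → L :=
  fun i => OrderDual.ofDual (c i.rev)

lemma dmax {a b : L} {k : ℕ} {c : Fin (k+1) → L} (hc : IsMaximalChain a b k c) :
    IsMaximalChain (OrderDual.toDual b) (OrderDual.toDual a) k (dchain c) := by
  refine ⟨?_, ?_, ?_⟩
  · show OrderDual.toDual (c (Fin.rev 0)) = _
    rw [Fin.rev_zero, hc.2.1]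
  · show OrderDual.toDual (c (Fin.last k).rev) = _
    rw [Fin.rev_last, hc.1]
  · intro i
    show OrderDual.toDual (c i.castSucc.rev) ⋖ OrderDual.toDual (c i.succ.rev)
    rw [Fin.rev_castSucc, Fin.rev_succ]
    exact (toDual_covBy_toDual_iff).2 (hc.2.2 i.rev)

lemma udmax {a b : L} {k : ℕ} {c : Fin (k+1) → Lᵒᵈ}
    (hc : IsMaximalChain (OrderDual.toDual b) (OrderDual.toDual a) k c) :
    IsMaximalChain a b k (udchain c) := by
  refine ⟨?_, ?_, ?_⟩
  · show OrderDual.ofDual (c (Fin.rev 0)) = _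
    rw [Fin.rev_zero, hc.2.1]; rfl
  · show OrderDual.ofDual (c (Fin.last k).rev) = _
    rw [Fin.rev_last, hc.1]; rfl
  · intro i
    show OrderDual.ofDual (c i.castSucc.rev) ⋖ OrderDual.ofDual (c i.succ.rev)
    rw [Fin.rev_castSucc, Fin.rev_succ]
    exact (ofDual_covBy_ofDual_iff).2 (hc.2.2 i.rev)

lemma udrstep {a b : L} {k : ℕ} {c d : Fin (k+1) → Lᵒᵈ}
    (hs : RStep (OrderDual.toDual b) (OrderDual.toDual a) k c d) :
    RStep a b k (udchain c) (udchain d) := by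
  obtain ⟨hc, hd, i, hi, hu⟩ := hs
  refine ⟨udmax hc, udmax hd, i.rev, ?_, ?_⟩
  · intro hEq
    apply hi
    have h1 : c i.rev.rev = d i.rev.rev := OrderDual.ofDual.injective hEq
    rwa [Fin.rev_rev] at h1
  · intro j hEq
    have h1 : c j.rev ≠ d j.rev := by
      intro h2
      exact hEq (congrArg OrderDual.ofDual h2)
    have h3 : j.rev = i := hu j.rev h1
    have h4 : j.rev.rev = i.rev := congrArg Fin.rev h3
    rwa [Fin.rev_rev] at h4

lemma udrequiv {a b : L} {k : ℕ} {c d : Fin (k+1) → Lᵒᵈ}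
    (he : REquiv (OrderDual.toDual b) (OrderDual.toDual a) k c d) :
    REquiv a b k (udchain c) (udchain d) := by
  induction he with
  | refl => exact Relation.ReflTransGen.refl
  | tail _ h2 ih => exact Relation.ReflTransGen.tail ih (udrstep h2)

lemma dual_semimodular (h : LowerSemimodular L) : Semimodular Lᵒᵈ := by
  intro x y h1 h2
  have g := h (OrderDual.ofDual x) (OrderDual.ofDual y)
    ⟨h1.1, fun _ hz1 hz2 => h1.2 hz2 hz1⟩ ⟨h2.1, fun _ hz1 hz2 => h2.2 hz2 hz1⟩
  exact ⟨⟨g.1.1, fun _ hz1 hz2 => g.1.2 hz2 hz1⟩, ⟨g.2.1, fun _ hz1 hz2 => g.2.2 hz2 hz1⟩⟩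

end MCAux

/-- In a lattice in which the lengths of all maximal chains between any two
fixed comparable elements are uniformly bounded, if the lattice is semimodular or lower
semimodular, then any two maximal chains between `a` and `b` are r-equivalent; in particular,
they have the same length. -/
theorem maximal_chains_r_equivalent {L : Type*} [Lattice L]
    (hbound : ∀ a b : L, a ≤ b → ∃ N : ℕ, ∀ (k : ℕ) (c : Fin (k + 1) → L),
      IsMaximalChain a b k c → k ≤ N)
    (hmod : Semimodular L ∨ LowerSemimodular L)
    (a b : L) (hab : a ≤ b) (k m : ℕ) (c : Fin (k + 1) → L) (d : Fin (m + 1) → L)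
    (hc : IsMaximalChain a b k c) (hd : IsMaximalChain a b m d) :
    ∃ hkm : k = m, REquiv a b m (fun i => c (Fin.cast (by rw [hkm]) i)) d := by
  obtain ⟨N, hN⟩ := hbound a b hab
  rcases hmod with hsm | hlsm
  · have hkm : k = m := MCAux.len_eq hsm N a b hN k m c d hc hd
    subst hkm
    refine ⟨rfl, ?_⟩
    have h := MCAux.requiv_aux hsm N a b hN k c d hc hd
    have hcast : (fun i : Fin (k+1) => c (Fin.cast (by rw [(rfl : k = k)] : k+1 = k+1) i)) = c := by
      funext i
      exact congrArg c (Fin.ext rfl)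
    exact hcast ▸ h
  · have hsmd : Semimodular Lᵒᵈ := MCAux.dual_semimodular hlsm
    have hNd : ∀ (j : ℕ) (e : Fin (j+1) → Lᵒᵈ),
        IsMaximalChain (OrderDual.toDual b) (OrderDual.toDual a) j e → j ≤ N :=
      fun j e he => hN j (MCAux.udchain e) (MCAux.udmax he)
    have hkm : k = m := MCAux.len_eq hsmd N _ _ hNd k m (MCAux.dchain c) (MCAux.dchain d)
      (MCAux.dmax hc) (MCAux.dmax hd)
    subst hkm
    refine ⟨rfl, ?_⟩
    have hre := MCAux.requiv_aux hsmd N _ _ hNd k (MCAux.dchain c) (MCAux.dchain d)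
      (MCAux.dmax hc) (MCAux.dmax hd)
    have h := MCAux.udrequiv hre
    have hud : ∀ (e : Fin (k+1) → L), MCAux.udchain (MCAux.dchain e) = e := by
      intro e
      funext i
      show OrderDual.ofDual (OrderDual.toDual (e i.rev.rev)) = e i
      rw [Fin.rev_rev]
      rfl
    rw [hud c, hud d] at h
    have hcast : (fun i : Fin (k+1) => c (Fin.cast (by rw [(rfl : k = k)] : k+1 = k+1) i)) = c := by
      funext i
      exact congrArg c (Fin.ext rfl)
    exact hcast ▸ h
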